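/- Let N ≥ 1 and let Cl be the Clifford algebra over ℂ^{2N} with respect to the quadratic form Q(x) = Σ_{i=1}^{2N} x_i², with canonical embedding ι : ℂ^{2N} → Cl (so ι(v)·ι(v) = Q(v)·1). For n = 1,…,N set c_n = ½(ι(e_{2n−1}) + i·ι(e_{2n})) and c_n* = ½(ι(e_{2n−1}) − i·ι(e_{2n})). For matrices α, β, γ ∈ Mat_N(ℂ) with βᵀ = −β and γᵀ = −γ, define 𝐀(α,β,γ) = ½·Σ_{n,m=1}^N ( α_{nm}·c_n*·c_m + β_{nm}·c_n*·c_m* + γ_{nm}·c_n·c_m − α_{mn}·c_n·c_m* ) ∈ Cl. Then for all such triples (α,β,γ) and (α',β',γ'), the commutator satisfies ⁅𝐀(α,β,γ), 𝐀(α',β',γ')⁆ = 𝐀(α'', β'', γ'') with α'' = [α,α'] + βγ' − β'γ, β'' = αβ' + β'αᵀ − α'β − β(α')ᵀ, and γ'' = γα' + (α')ᵀγ − γ'α − αᵀγ'; in other words, the map [[α, β],[γ, −αᵀ]] ↦ 𝐀(α,β,γ) is a Lie algebra homomorphism. -/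
import Mathlib

noncomputable section
open Matrix

/-- The quadratic form Q(x) = Σᵢ xᵢ² on ℂ^{2N}. -/
noncomputable def QF (N : ℕ) : QuadraticForm ℂ (Fin (2 * N) → ℂ) :=
  QuadraticMap.weightedSumSquares ℂ (fun _ : Fin (2 * N) => (1 : ℂ))

/-- The annihilation operator c_n = ½(ι(e_{2n-1}) + i·ι(e_{2n})) (1-based indices). -/
noncomputable def cAnn (N : ℕ) (n : Fin N) : CliffordAlgebra (QF N) :=
  (2 : ℂ)⁻¹ •
    (CliffordAlgebra.ι (QF N) (Pi.single (⟨2 * (n : ℕ), by have := n.isLt; omega⟩ : Fin (2 * N)) 1) +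
      Complex.I •
        CliffordAlgebra.ι (QF N) (Pi.single (⟨2 * (n : ℕ) + 1, by have := n.isLt; omega⟩ : Fin (2 * N)) 1))

/-- The creation operator c_n* = ½(ι(e_{2n-1}) - i·ι(e_{2n})) (1-based indices). -/
noncomputable def cCre (N : ℕ) (n : Fin N) : CliffordAlgebra (QF N) :=
  (2 : ℂ)⁻¹ •
    (CliffordAlgebra.ι (QF N) (Pi.single (⟨2 * (n : ℕ), by have := n.isLt; omega⟩ : Fin (2 * N)) 1) -
      Complex.I •
        CliffordAlgebra.ι (QF N) (Pi.single (⟨2 * (n : ℕ) + 1, by have := n.isLt; omega⟩ : Fin (2 * N)) 1))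

/-- The quadratic-Hamiltonian second quantization
𝐀(α,β,γ) = ½·Σ_{n,m} (α_{nm} c_n* c_m + β_{nm} c_n* c_m* + γ_{nm} c_n c_m - α_{mn} c_n c_m*). -/
noncomputable def quadHam (N : ℕ) (α β γ : Matrix (Fin N) (Fin N) ℂ) :
    CliffordAlgebra (QF N) :=
  (2 : ℂ)⁻¹ •
    ∑ n : Fin N, ∑ m : Fin N,
      (α n m • (cCre N n * cAnn N m) + β n m • (cCre N n * cCre N m) +
        γ n m • (cAnn N n * cAnn N m) - α m n • (cAnn N n * cCre N m))

/-! ### Auxiliary: subtraction of block matrices -/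

theorem fromBlocks_sub' {n m R : Type*} [Sub R] (A A' : Matrix n n R) (B B' : Matrix n m R)
    (C C' : Matrix m n R) (D D' : Matrix m m R) :
    fromBlocks A B C D - fromBlocks A' B' C' D' =
      fromBlocks (A - A') (B - B') (C - C') (D - D') := by
  ext i j; cases i <;> cases j <;> simp [fromBlocks]

/-! ### General quadratic elements over generators with given anticommutation relations -/

section general
variable {A : Type*} [Ring A] [Algebra ℂ A] {I : Type*} [Fintype I] [DecidableEq I]

noncomputable def quadElem (d : I → A) (M : Matrix I I ℂ) : A :=
  (2 : ℂ)⁻¹ • ∑ y : I × I, M y.1 y.2 • (d y.1 * d y.2)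

omit [Fintype I] [DecidableEq I] in
theorem move_one (d : I → A) (κ : Matrix I I ℂ)
    (hκ : ∀ x y, d x * d y + d y * d x = κ x y • (1 : A)) (a b c : I) :
    d a * (d b * d c) = κ a b • d c - κ a c • d b + d b * d c * d a := by
  have h : ∀ x y, d x * d y = κ x y • (1 : A) - d y * d x := fun x y =>
    eq_sub_of_add_eq (hκ x y)
  calc d a * (d b * d c) = (d a * d b) * d c := by rw [mul_assoc]
    _ = (κ a b • (1:A) - d b * d a) * d c := by rw [h a b]
    _ = κ a b • d c - d b * (d a * d c) := by
        rw [sub_mul, smul_mul_assoc, one_mul, mul_assoc]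
    _ = κ a b • d c - d b * (κ a c • (1:A) - d c * d a) := by rw [h a c]
    _ = κ a b • d c - κ a c • d b + d b * d c * d a := by
        rw [mul_sub, mul_smul_comm, mul_one, mul_assoc]; abel

omit [Fintype I] [DecidableEq I] in
theorem comm_monomial (d : I → A) (κ : Matrix I I ℂ)
    (hκ : ∀ x y, d x * d y + d y * d x = κ x y • (1 : A)) (a b c e : I) :
    d a * d b * (d c * d e) - d c * d e * (d a * d b) =
      κ b c • (d a * d e) - κ b e • (d a * d c) +
        (κ a c • (d e * d b) - κ a e • (d c * d b)) := by
  have h1 : d b * (d c * d e) = κ b c • d e - κ b e • d c + d c * d e * d b :=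
    move_one d κ hκ b c e
  have h2 : d a * (d c * d e) = κ a c • d e - κ a e • d c + d c * d e * d a :=
    move_one d κ hκ a c e
  calc d a * d b * (d c * d e) - d c * d e * (d a * d b)
      = d a * (κ b c • d e - κ b e • d c + d c * d e * d b) - d c * d e * (d a * d b) := by
        rw [mul_assoc, h1]
    _ = κ b c • (d a * d e) - κ b e • (d a * d c) +
          (d a * (d c * d e)) * d b - d c * d e * (d a * d b) := by
        rw [mul_add, mul_sub, mul_smul_comm, mul_smul_comm, ← mul_assoc]
    _ = κ b c • (d a * d e) - κ b e • (d a * d c) +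
          (κ a c • d e - κ a e • d c + d c * d e * d a) * d b - d c * d e * (d a * d b) := by
        rw [h2]
    _ = _ := by
        rw [add_mul, sub_mul, smul_mul_assoc, smul_mul_assoc, mul_assoc (d c * d e), mul_assoc]
        abel

theorem quadElem_comm (d : I → A) (κ : Matrix I I ℂ)
    (hκ : ∀ x y, d x * d y + d y * d x = κ x y • (1 : A))
    (hκs : κᵀ = κ) (M M' : Matrix I I ℂ) (hM : Mᵀ = -M) (hM' : M'ᵀ = -M') :
    quadElem d M * quadElem d M' - quadElem d M' * quadElem d M =
      quadElem d (M * κ * M' - M' * κ * M) := by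
  classical
  set Q := ((I × I) × I × I)
  set S : A := ∑ y : I × I, M y.1 y.2 • (d y.1 * d y.2) with hS
  set S' : A := ∑ y : I × I, M' y.1 y.2 • (d y.1 * d y.2) with hS'
  have hhalf : ∀ X Y : A, ((2:ℂ)⁻¹ • X) * ((2:ℂ)⁻¹ • Y) = ((4:ℂ)⁻¹) • (X * Y) := by
    intro X Y
    rw [smul_mul_assoc, mul_smul_comm, smul_smul]
    norm_num
  have hSS' : S * S' = ∑ x : Q,
      (M x.1.1 x.1.2 * M' x.2.1 x.2.2) • (d x.1.1 * d x.1.2 * (d x.2.1 * d x.2.2)) := by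
    rw [hS, hS', Finset.sum_mul_sum]
    conv_rhs => rw [Fintype.sum_prod_type]
    refine Finset.sum_congr rfl fun p _ => Finset.sum_congr rfl fun q _ => ?_
    rw [smul_mul_smul_comm]
  have hS'S : S' * S = ∑ x : Q,
      (M x.1.1 x.1.2 * M' x.2.1 x.2.2) • (d x.2.1 * d x.2.2 * (d x.1.1 * d x.1.2)) := by
    rw [hS, hS', Finset.sum_mul_sum, Finset.sum_comm]
    conv_rhs => rw [Fintype.sum_prod_type]
    refine Finset.sum_congr rfl fun p _ => Finset.sum_congr rfl fun q _ => ?_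
    rw [smul_mul_smul_comm, mul_comm]
  have hdiff : S * S' - S' * S = ∑ x : Q, (M x.1.1 x.1.2 * M' x.2.1 x.2.2) •
      (κ x.1.2 x.2.1 • (d x.1.1 * d x.2.2) - κ x.1.2 x.2.2 • (d x.1.1 * d x.2.1) +
        (κ x.1.1 x.2.1 • (d x.2.2 * d x.1.2) - κ x.1.1 x.2.2 • (d x.2.1 * d x.1.2))) := by
    rw [hSS', hS'S, ← Finset.sum_sub_distrib]
    exact Finset.sum_congr rfl fun x _ => by rw [← smul_sub, comm_monomial d κ hκ]
  simp only [smul_sub, smul_add, smul_smul] at hdiff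
  rw [Finset.sum_add_distrib, Finset.sum_sub_distrib, Finset.sum_sub_distrib] at hdiff
  have hc : ∀ (X Y Z : Matrix I I ℂ) (i j : I),
      (X * Y * Z) i j = ∑ p : I × I, X i p.2 * Y p.2 p.1 * Z p.1 j := by
    intro X Y Z i j
    rw [Fintype.sum_prod_type]
    simp only [Matrix.mul_apply, Finset.sum_mul]
  have hpack : ∀ X Y Z : Matrix I I ℂ,
      (∑ y : I × I, (X * Y * Z) y.1 y.2 • (d y.1 * d y.2)) =
        ∑ x : Q, (X x.1.1 x.2.2 * Y x.2.2 x.2.1 * Z x.2.1 x.1.2) • (d x.1.1 * d x.1.2) := by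
    intro X Y Z
    conv_rhs => rw [Fintype.sum_prod_type]
    exact Finset.sum_congr rfl fun y _ => by rw [hc X Y Z y.1 y.2, Finset.sum_smul]
  have hT1 : (∑ x : Q, (M x.1.1 x.1.2 * M' x.2.1 x.2.2 * κ x.1.2 x.2.1) • (d x.1.1 * d x.2.2))
      = ∑ y : I × I, (M * κ * M') y.1 y.2 • (d y.1 * d y.2) := by
    rw [hpack M κ M']
    refine Fintype.sum_equiv
      ⟨fun x => ((x.1.1, x.2.2), (x.2.1, x.1.2)), fun x => ((x.1.1, x.2.2), (x.2.1, x.1.2)),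
        by rintro ⟨⟨a,b⟩,⟨c,e⟩⟩; rfl, by rintro ⟨⟨a,b⟩,⟨c,e⟩⟩; rfl⟩ _ _ ?_
    rintro ⟨⟨i,j⟩,⟨k,l⟩⟩
    dsimp only
    module
  have hT2 : (∑ x : Q, (M x.1.1 x.1.2 * M' x.2.1 x.2.2 * κ x.1.2 x.2.2) • (d x.1.1 * d x.2.1))
      = ∑ y : I × I, (M * κ * M'ᵀ) y.1 y.2 • (d y.1 * d y.2) := by
    rw [hpack M κ M'ᵀ]
    refine Fintype.sum_equiv
      ⟨fun x => ((x.1.1, x.2.1), (x.2.2, x.1.2)), fun x => ((x.1.1, x.2.2), (x.1.2, x.2.1)),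
        by rintro ⟨⟨a,b⟩,⟨c,e⟩⟩; rfl, by rintro ⟨⟨a,b⟩,⟨c,e⟩⟩; rfl⟩ _ _ ?_
    rintro ⟨⟨i,j⟩,⟨k,l⟩⟩
    dsimp only
    simp only [Matrix.transpose_apply]
    module
  have hT3 : (∑ x : Q, (M x.1.1 x.1.2 * M' x.2.1 x.2.2 * κ x.1.1 x.2.1) • (d x.2.2 * d x.1.2))
      = ∑ y : I × I, (M'ᵀ * κᵀ * M) y.1 y.2 • (d y.1 * d y.2) := by
    rw [hpack M'ᵀ κᵀ M]
    refine Fintype.sum_equiv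
      ⟨fun x => ((x.2.2, x.1.2), (x.1.1, x.2.1)), fun x => ((x.2.1, x.1.2), (x.2.2, x.1.1)),
        by rintro ⟨⟨a,b⟩,⟨c,e⟩⟩; rfl, by rintro ⟨⟨a,b⟩,⟨c,e⟩⟩; rfl⟩ _ _ ?_
    rintro ⟨⟨i,j⟩,⟨k,l⟩⟩
    dsimp only
    simp only [Matrix.transpose_apply]
    module
  have hT4 : (∑ x : Q, (M x.1.1 x.1.2 * M' x.2.1 x.2.2 * κ x.1.1 x.2.2) • (d x.2.1 * d x.1.2))
      = ∑ y : I × I, (M' * κᵀ * M) y.1 y.2 • (d y.1 * d y.2) := by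
    rw [hpack M' κᵀ M]
    refine Fintype.sum_equiv
      ⟨fun x => ((x.2.1, x.1.2), (x.1.1, x.2.2)), fun x => ((x.2.1, x.1.2), (x.1.1, x.2.2)),
        by rintro ⟨⟨a,b⟩,⟨c,e⟩⟩; rfl, by rintro ⟨⟨a,b⟩,⟨c,e⟩⟩; rfl⟩ _ _ ?_
    rintro ⟨⟨i,j⟩,⟨k,l⟩⟩
    dsimp only
    simp only [Matrix.transpose_apply]
    module
  rw [hT1, hT2, hT3, hT4] at hdiff
  have hm2 : M * κ * M'ᵀ = -(M * κ * M') := by rw [hM', Matrix.mul_neg]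
  have hm3 : M'ᵀ * κᵀ * M = -(M' * κ * M) := by rw [hM', hκs, Matrix.neg_mul, Matrix.neg_mul]
  have hm4 : M' * κᵀ * M = M' * κ * M := by rw [hκs]
  rw [hm2, hm3, hm4] at hdiff
  simp only [Matrix.neg_apply, neg_smul, Finset.sum_neg_distrib] at hdiff
  simp only [quadElem]
  rw [← hS, ← hS', hhalf S S', hhalf S' S, ← smul_sub, hdiff]
  simp only [Matrix.sub_apply, sub_smul, Finset.sum_sub_distrib]
  module

end general

/-! ### The Clifford generators and CAR relations -/

noncomputable def EE (N : ℕ) (i : Fin (2 * N)) : CliffordAlgebra (QF N) :=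
  CliffordAlgebra.ι (QF N) (Pi.single i 1)

theorem QF_single (N : ℕ) (i : Fin (2 * N)) (c : ℂ) : QF N (Pi.single i c) = c * c := by
  simp [QF, Pi.single_apply, ite_mul, Finset.sum_ite_eq]

theorem EE_sq (N : ℕ) (i : Fin (2 * N)) : EE N i * EE N i = 1 := by
  rw [EE, CliffordAlgebra.ι_sq_scalar, QF_single, mul_one, _root_.map_one]

theorem EE_swap (N : ℕ) {i j : Fin (2 * N)} (h : i ≠ j) :
    EE N j * EE N i = -(EE N i * EE N j) := by
  have horth : (QF N).IsOrtho (Pi.single i 1) (Pi.single j 1) := by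
    rw [QuadraticMap.isOrtho_def, QF_single, QF_single]
    simp only [QF, QuadraticMap.weightedSumSquares_apply, one_smul, Pi.add_apply,
      Pi.single_apply]
    calc (∑ k : Fin (2*N), ((if k = i then (1:ℂ) else 0) + (if k = j then 1 else 0)) *
            ((if k = i then (1:ℂ) else 0) + (if k = j then 1 else 0)))
        = ∑ k : Fin (2*N), ((if k = i then (1:ℂ) else 0) + (if k = j then 1 else 0)) :=
          Finset.sum_congr rfl fun k _ => by
            split_ifs with h1 h2 <;> first | (exact absurd (h1 ▸ h2 ▸ rfl : i = j) h) | ring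
      _ = 1 * 1 + 1 * 1 := by
          rw [Finset.sum_add_distrib]
          simp [Finset.sum_ite_eq']
  have := CliffordAlgebra.ι_mul_ι_add_swap_of_isOrtho horth
  rw [EE, EE]
  linear_combination (norm := noncomm_ring) this

def i0 (N : ℕ) (n : Fin N) : Fin (2 * N) := ⟨2 * (n : ℕ), by have := n.isLt; omega⟩
def i1 (N : ℕ) (n : Fin N) : Fin (2 * N) := ⟨2 * (n : ℕ) + 1, by have := n.isLt; omega⟩

theorem cAnn_eq (N : ℕ) (n : Fin N) :
    cAnn N n = (2 : ℂ)⁻¹ • (EE N (i0 N n) + Complex.I • EE N (i1 N n)) := rfl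
theorem cCre_eq (N : ℕ) (n : Fin N) :
    cCre N n = (2 : ℂ)⁻¹ • (EE N (i0 N n) - Complex.I • EE N (i1 N n)) := rfl

theorem i0_inj {N : ℕ} {n m : Fin N} (h : n ≠ m) : i0 N n ≠ i0 N m := by
  simp only [i0, ne_eq, Fin.mk.injEq]
  exact fun hc => h (Fin.ext (by omega))
theorem i1_inj {N : ℕ} {n m : Fin N} (h : n ≠ m) : i1 N n ≠ i1 N m := by
  simp only [i1, ne_eq, Fin.mk.injEq]
  exact fun hc => h (Fin.ext (by omega))
theorem i0_ne_i1 {N : ℕ} (n m : Fin N) : i0 N n ≠ i1 N m := by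
  simp only [i0, i1, ne_eq, Fin.mk.injEq]
  omega

theorem car_ann_ann (N : ℕ) (n m : Fin N) :
    cAnn N n * cAnn N m + cAnn N m * cAnn N n = 0 := by
  by_cases hnm : n = m
  · subst hnm
    rw [cAnn_eq]
    simp only [smul_add, smul_sub, smul_smul, smul_mul_assoc, mul_smul_comm, add_mul, mul_add]
    rw [EE_swap N (i0_ne_i1 n n), EE_sq, EE_sq]
    match_scalars <;> norm_num [Complex.ext_iff]
  · rw [cAnn_eq, cAnn_eq]
    simp only [smul_add, smul_sub, smul_smul, smul_mul_assoc, mul_smul_comm, add_mul, mul_add]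
    rw [EE_swap N (i0_inj hnm), EE_swap N (i0_ne_i1 n m), EE_swap N (Ne.symm (i0_ne_i1 m n)),
      EE_swap N (i1_inj hnm)]
    match_scalars <;> norm_num [Complex.ext_iff]

theorem car_cre_cre (N : ℕ) (n m : Fin N) :
    cCre N n * cCre N m + cCre N m * cCre N n = 0 := by
  by_cases hnm : n = m
  · subst hnm
    rw [cCre_eq]
    simp only [smul_add, smul_sub, smul_smul, smul_mul_assoc, mul_smul_comm, add_mul, mul_add,
      sub_mul, mul_sub]
    rw [EE_swap N (i0_ne_i1 n n), EE_sq, EE_sq]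
    match_scalars <;> norm_num [Complex.ext_iff]
  · rw [cCre_eq, cCre_eq]
    simp only [smul_add, smul_sub, smul_smul, smul_mul_assoc, mul_smul_comm, add_mul, mul_add,
      sub_mul, mul_sub]
    rw [EE_swap N (i0_inj hnm), EE_swap N (i0_ne_i1 n m), EE_swap N (Ne.symm (i0_ne_i1 m n)),
      EE_swap N (i1_inj hnm)]
    match_scalars <;> norm_num [Complex.ext_iff]

theorem car_cre_ann (N : ℕ) (n m : Fin N) :
    cCre N n * cAnn N m + cAnn N m * cCre N n = (if n = m then (1:ℂ) else 0) • 1 := by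
  by_cases hnm : n = m
  · subst hnm
    rw [if_pos rfl, cCre_eq, cAnn_eq]
    simp only [smul_add, smul_sub, smul_smul, smul_mul_assoc, mul_smul_comm, add_mul, mul_add,
      sub_mul, mul_sub]
    rw [EE_swap N (i0_ne_i1 n n), EE_sq, EE_sq]
    match_scalars <;> norm_num [Complex.ext_iff]
  · rw [if_neg hnm, cCre_eq, cAnn_eq]
    simp only [smul_add, smul_sub, smul_smul, smul_mul_assoc, mul_smul_comm, add_mul, mul_add,
      sub_mul, mul_sub]
    rw [EE_swap N (i0_inj hnm), EE_swap N (i0_ne_i1 n m), EE_swap N (Ne.symm (i0_ne_i1 m n)),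
      EE_swap N (i1_inj hnm)]
    match_scalars <;> norm_num [Complex.ext_iff]

theorem car_ann_cre (N : ℕ) (n m : Fin N) :
    cAnn N n * cCre N m + cCre N m * cAnn N n = (if n = m then (1:ℂ) else 0) • 1 := by
  by_cases hnm : n = m
  · subst hnm
    rw [if_pos rfl, cCre_eq, cAnn_eq]
    simp only [smul_add, smul_sub, smul_smul, smul_mul_assoc, mul_smul_comm, add_mul, mul_add,
      sub_mul, mul_sub]
    rw [EE_swap N (i0_ne_i1 n n), EE_sq, EE_sq]
    match_scalars <;> norm_num [Complex.ext_iff]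
  · rw [if_neg hnm, cCre_eq, cAnn_eq]
    simp only [smul_add, smul_sub, smul_smul, smul_mul_assoc, mul_smul_comm, add_mul, mul_add,
      sub_mul, mul_sub]
    rw [EE_swap N (i0_inj hnm), EE_swap N (i0_ne_i1 n m), EE_swap N (Ne.symm (i0_ne_i1 m n)),
      EE_swap N (i1_inj hnm)]
    match_scalars <;> norm_num [Complex.ext_iff]

/-! ### Bridging quadHam with quadElem -/

theorem quadHam_eq_quadElem (N : ℕ) (α β γ : Matrix (Fin N) (Fin N) ℂ) :
    quadHam N α β γ =
      quadElem (Sum.elim (cCre N) (cAnn N)) (fromBlocks β α (-αᵀ) γ) := by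
  rw [quadHam, quadElem]
  congr 1
  simp only [Fintype.sum_prod_type, Fintype.sum_sum_type, Sum.elim_inl, Sum.elim_inr,
    Matrix.fromBlocks_apply₁₁, Matrix.fromBlocks_apply₁₂, Matrix.fromBlocks_apply₂₁,
    Matrix.fromBlocks_apply₂₂, Matrix.neg_apply, Matrix.transpose_apply, neg_smul,
    sub_eq_add_neg, Finset.sum_add_distrib, Finset.sum_neg_distrib]
  abel

/-- Proposition C.1: the commutator of two quadratic Hamiltonians is the
quadratic Hamiltonian of the matrix commutator, i.e. [[α,β],[γ,-αᵀ]] ↦ 𝐀(α,β,γ) is a Lie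
algebra homomorphism. -/
theorem quadratic_commutator_identity (N : ℕ) (hN : 1 ≤ N)
    (α β γ α' β' γ' : Matrix (Fin N) (Fin N) ℂ)
    (hβ : βᵀ = -β) (hγ : γᵀ = -γ) (hβ' : β'ᵀ = -β') (hγ' : γ'ᵀ = -γ') :
    quadHam N α β γ * quadHam N α' β' γ' - quadHam N α' β' γ' * quadHam N α β γ =
      quadHam N (α * α' - α' * α + (β * γ' - β' * γ))
        (α * β' + β' * αᵀ - α' * β - β * α'ᵀ)
        (γ * α' + α'ᵀ * γ - γ' * α - αᵀ * γ') ∧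
    Matrix.fromBlocks (α * α' - α' * α + (β * γ' - β' * γ))
        (α * β' + β' * αᵀ - α' * β - β * α'ᵀ)
        (γ * α' + α'ᵀ * γ - γ' * α - αᵀ * γ')
        (-(α * α' - α' * α + (β * γ' - β' * γ))ᵀ) =
      Matrix.fromBlocks α β γ (-αᵀ) * Matrix.fromBlocks α' β' γ' (-α'ᵀ) -
        Matrix.fromBlocks α' β' γ' (-α'ᵀ) * Matrix.fromBlocks α β γ (-αᵀ) := by
  constructor
  · set d : (Fin N ⊕ Fin N) → CliffordAlgebra (QF N) := Sum.elim (cCre N) (cAnn N) with hd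
    set κ : Matrix (Fin N ⊕ Fin N) (Fin N ⊕ Fin N) ℂ := fromBlocks 0 1 1 0 with hκdef
    have hκ : ∀ x y, d x * d y + d y * d x = κ x y • (1 : CliffordAlgebra (QF N)) := by
      rintro (n | n) (m | m)
      · simpa [hd, hκdef] using car_cre_cre N n m
      · simpa [hd, hκdef, Matrix.one_apply] using car_cre_ann N n m
      · simpa [hd, hκdef, Matrix.one_apply] using car_ann_cre N n m
      · simpa [hd, hκdef] using car_ann_ann N n m
    have hκs : κᵀ = κ := by
      rw [hκdef, Matrix.fromBlocks_transpose]
      simp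
    have hMM : ∀ (a b g : Matrix (Fin N) (Fin N) ℂ), bᵀ = -b → gᵀ = -g →
        (fromBlocks b a (-aᵀ) g)ᵀ = -(fromBlocks b a (-aᵀ) g) := by
      intro a b g hb hg
      rw [Matrix.fromBlocks_transpose, Matrix.fromBlocks_neg]
      rw [hb, hg]
      congr 1 <;> simp
    have key := quadElem_comm d κ hκ hκs (fromBlocks β α (-αᵀ) γ) (fromBlocks β' α' (-α'ᵀ) γ')
      (hMM α β γ hβ hγ) (hMM α' β' γ' hβ' hγ')
    rw [quadHam_eq_quadElem, quadHam_eq_quadElem, quadHam_eq_quadElem, key]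
    congr 1
    rw [hκdef]
    rw [show (fromBlocks β α (-αᵀ) γ) * (fromBlocks 0 1 1 0) = fromBlocks α β γ (-αᵀ) by
      rw [Matrix.fromBlocks_multiply]; congr 1 <;> simp]
    rw [show (fromBlocks β' α' (-α'ᵀ) γ') * (fromBlocks 0 1 1 0) = fromBlocks α' β' γ' (-α'ᵀ) by
      rw [Matrix.fromBlocks_multiply]; congr 1 <;> simp]
    rw [Matrix.fromBlocks_multiply, Matrix.fromBlocks_multiply, fromBlocks_sub',
      Matrix.fromBlocks_inj]
    refine ⟨by noncomm_ring, by noncomm_ring, ?_, by noncomm_ring⟩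
    simp only [transpose_add, transpose_sub, transpose_mul, transpose_transpose, hβ, hγ, hβ', hγ']
    noncomm_ring
  · rw [Matrix.fromBlocks_multiply, Matrix.fromBlocks_multiply, fromBlocks_sub',
      Matrix.fromBlocks_inj]
    refine ⟨by noncomm_ring, by noncomm_ring, by noncomm_ring, ?_⟩
    simp only [transpose_add, transpose_sub, transpose_mul, transpose_transpose, hβ, hγ, hβ', hγ']
    noncomm_ring
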